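/- Let L : E → ℝ be continuous, θ ∈ E and δ > 0. Then lim_{p→∞} δ · ‖L‖_p^{δ,θ} = sup_{t ∈ [−δ,δ], v ∈ φ(θ)} |L(θ + t·v) − L(θ)|, where the limit is taken along real exponents p → ∞. -/

import Mathlib

open MeasureTheory Filter Set

noncomputable section

/-- `E = E₁ × F` with the product (ℓ²) inner product, where
`E₁ = Π i : Fin N₁, EuclideanSpace ℝ (Fin (n i))`. -/
abbrev BNSpace {N₁ : ℕ} (n : Fin N₁ → ℕ) (F : Type*) [NormedAddCommGroup F] :=
  WithLp 2 ((PiLp 2 fun i => EuclideanSpace ℝ (Fin (n i))) × F)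

variable {N₁ : ℕ} {n : Fin N₁ → ℕ} {F : Type*} [NormedAddCommGroup F]
  [InnerProductSpace ℝ F] [FiniteDimensional ℝ F]

/-- `φ(θ)`: the set of `v = (v₁, …, v_{N₁}, v*)` with `‖vᵢ‖ = ‖θᵢ‖` for all `i`
and `‖v*‖ = 1`. -/
def phi (θ : BNSpace n F) : Set (BNSpace n F) :=
  {v | (∀ i, ‖v.ofLp.1 i‖ = ‖θ.ofLp.1 i‖) ∧ ‖v.ofLp.2‖ = 1}

/-- The δ-Lᵖ BN-sharpness
`‖L‖_p^{δ,θ} = sup_{v ∈ φ(θ)} δ^{-1/p} (∫_{-δ}^{δ} |(L(θ + t·v) − L(θ))/δ|^p dt)^{1/p}`. -/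
def bnSharpness (L : BNSpace n F → ℝ) (p δ : ℝ) (θ : BNSpace n F) : ℝ :=
  sSup ((fun v => δ ^ (-(1 / p)) *
    (∫ t in (-δ)..δ, |(L (θ + t • v) - L θ) / δ| ^ p) ^ (1 / p)) '' phi θ)

theorem aux_isCompact_phi (θ : BNSpace n F) : IsCompact (phi θ) := by
  have h1 : IsClosed (phi θ) := by
    have : phi θ = (⋂ i, {v : BNSpace n F | ‖v.ofLp.1 i‖ = ‖θ.ofLp.1 i‖}) ∩ {v | ‖v.ofLp.2‖ = 1} := by
      ext v; simp [phi, Set.mem_iInter]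
    rw [this]
    exact (isClosed_iInter fun i => isClosed_eq (by fun_prop) continuous_const).inter
      (isClosed_eq (by fun_prop) continuous_const)
  refine (isCompact_closedBall (0 : BNSpace n F) (Real.sqrt (‖θ.ofLp.1‖^2 + 1))).of_isClosed_subset
    h1 fun v hv => ?_
  simp only [Metric.mem_closedBall, dist_zero_right]
  apply le_of_eq
  have hv1 : ‖v.ofLp.1‖ = ‖θ.ofLp.1‖ := by
    rw [PiLp.norm_eq_of_L2, PiLp.norm_eq_of_L2]
    congr 1
    exact Finset.sum_congr rfl fun i _ => by rw [hv.1 i]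
  rw [WithLp.prod_norm_eq_of_L2]
  show √(‖v.ofLp.1‖ ^ 2 + ‖v.ofLp.2‖ ^ 2) = _
  rw [hv1, hv.2, one_pow]

theorem aux_tendsto_rpow_one_div (b : ℝ) (hb : 0 < b) :
    Tendsto (fun p : ℝ => b ^ (1/p)) atTop (nhds 1) := by
  have h0 : Tendsto (fun p : ℝ => 1/p) atTop (nhds 0) := by
    simpa [one_div] using tendsto_inv_atTop_zero
  have h1 := (Real.continuous_exp.tendsto (Real.log b * 0)).comp (h0.const_mul (Real.log b))
  simpa [Real.rpow_def_of_pos hb, Function.comp_def] using h1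

theorem aux_rpow_mul_pow (x c p : ℝ) (hx : 0 ≤ x) (hc : 0 ≤ c) (hp : p ≠ 0) :
    (x * c ^ p) ^ (1/p) = x ^ (1/p) * c := by
  rw [Real.mul_rpow hx (Real.rpow_nonneg hc _), ← Real.rpow_mul hc,
    mul_one_div_cancel hp, Real.rpow_one]

/-- For continuous `L`, `δ · ‖L‖_p^{δ,θ}` tends, as the real exponent `p → ∞`, to
`sup_{t ∈ [−δ,δ], v ∈ φ(θ)} |L(θ + t·v) − L(θ)|`. -/
theorem bnSharpness_tendsto_atTop (L : BNSpace n F → ℝ) (hL : Continuous L)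
    (θ : BNSpace n F) (δ : ℝ) (hδ : 0 < δ) :
    Tendsto (fun p : ℝ => δ * bnSharpness L p δ θ) atTop
      (nhds (sSup ((fun q : ℝ × BNSpace n F => |L (θ + q.1 • q.2) - L θ|) ''
        (Set.Icc (-δ) δ ×ˢ phi θ)))) := by
  set g : ℝ × BNSpace n F → ℝ := fun q => |L (θ + q.1 • q.2) - L θ| with hg
  set K : Set (ℝ × BNSpace n F) := Set.Icc (-δ) δ ×ˢ phi θ with hK
  set M : ℝ := sSup (g '' K) with hMdef
  rcases Set.eq_empty_or_nonempty (phi θ) with hphi | ⟨w₀, hw₀⟩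
  · have h1 : ∀ p : ℝ, bnSharpness L p δ θ = 0 := by
      intro p; rw [bnSharpness, hphi, Set.image_empty, Real.sSup_empty]
    have h2 : M = 0 := by
      rw [hMdef, hK, hphi, Set.prod_empty, Set.image_empty, Real.sSup_empty]
    simp only [h1, h2, mul_zero]
    exact tendsto_const_nhds
  have hgc : Continuous g := by fun_prop
  have hKc : IsCompact K := isCompact_Icc.prod (aux_isCompact_phi θ)
  have h0mem : ((0 : ℝ), w₀) ∈ K := by
    refine ⟨?_, hw₀⟩
    constructor <;> simp <;> linarith
  have hKne : K.Nonempty := ⟨_, h0mem⟩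
  have himg : IsCompact (g '' K) := hKc.image hgc
  have hbdd : BddAbove (g '' K) := himg.bddAbove
  obtain ⟨q₀, hq₀K, hq₀⟩ := himg.sSup_mem (hKne.image g)
  have hM0 : 0 ≤ M := by
    have h1 : g (0, w₀) = 0 := by simp [hg]
    have h2 := le_csSup hbdd (Set.mem_image_of_mem g h0mem)
    rw [h1] at h2; exact h2
  have hgle : ∀ q ∈ K, g q ≤ M := fun q hq => le_csSup hbdd (Set.mem_image_of_mem g hq)
  -- abbreviations
  have hkey : ∀ (t : ℝ) (v : BNSpace n F), |(L (θ + t • v) - L θ) / δ| = g (t, v) / δ := by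
    intro t v; rw [abs_div, abs_of_pos hδ]
  have hcont : ∀ (v : BNSpace n F) (p : ℝ), 0 ≤ p →
      Continuous fun t : ℝ => |(L (θ + t • v) - L θ) / δ| ^ p := by
    intro v p hp
    have h : Continuous fun t : ℝ => |(L (θ + t • v) - L θ) / δ| := by fun_prop
    exact h.rpow_const fun t => Or.inr hp
  -- upper bound on each element of the sup, for p ≥ 1
  have hInn : ∀ (p : ℝ), 0 < p → ∀ v : BNSpace n F,
      0 ≤ ∫ t in (-δ)..δ, |(L (θ + t • v) - L θ) / δ| ^ p := by
    intro p hp v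
    exact intervalIntegral.integral_nonneg (by linarith)
      fun t _ => Real.rpow_nonneg (abs_nonneg _) _
  have hEub : ∀ p : ℝ, 1 ≤ p → ∀ v ∈ phi θ,
      δ ^ (-(1/p)) * (∫ t in (-δ)..δ, |(L (θ + t • v) - L θ) / δ| ^ p) ^ (1/p)
        ≤ 2 ^ (1/p) * M / δ := by
    intro p hp v hv
    have hp0 : (0:ℝ) < p := by linarith
    have h1p : (0:ℝ) ≤ 1/p := by positivity
    have hMδ : (0:ℝ) ≤ M / δ := div_nonneg hM0 hδ.le
    have hI : (∫ t in (-δ)..δ, |(L (θ + t • v) - L θ) / δ| ^ p) ≤ 2 * δ * (M/δ) ^ p := by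
      have h2 := intervalIntegral.integral_mono_on (μ := volume) (by linarith : -δ ≤ δ)
        ((hcont v p hp0.le).intervalIntegrable _ _)
        (intervalIntegrable_const (c := (M/δ) ^ p))
        (fun t ht => by
          rw [hkey]
          have hg1 := hgle (t, v) ⟨ht, hv⟩
          gcongr)
      rw [intervalIntegral.integral_const, smul_eq_mul] at h2
      calc (∫ t in (-δ)..δ, |(L (θ + t • v) - L θ) / δ| ^ p)
          ≤ (δ - -δ) * (M/δ) ^ p := h2
        _ = 2 * δ * (M/δ) ^ p := by ring
    have hδδ : δ ^ (-(1/p)) * δ ^ (1/p) = 1 := by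
      rw [← Real.rpow_add hδ]; norm_num
    calc δ ^ (-(1/p)) * (∫ t in (-δ)..δ, |(L (θ + t • v) - L θ) / δ| ^ p) ^ (1/p)
        ≤ δ ^ (-(1/p)) * (2 * δ * (M/δ) ^ p) ^ (1/p) := by
          refine mul_le_mul_of_nonneg_left ?_ (Real.rpow_nonneg hδ.le _)
          exact Real.rpow_le_rpow (hInn p hp0 v) hI h1p
      _ = 2 ^ (1/p) * M / δ := by
          rw [aux_rpow_mul_pow _ _ _ (by positivity) hMδ hp0.ne',
            Real.mul_rpow (by norm_num) hδ.le]
          calc δ ^ (-(1/p)) * (2 ^ (1/p) * δ ^ (1/p) * (M/δ))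
              = (δ ^ (-(1/p)) * δ ^ (1/p)) * (2 ^ (1/p) * (M/δ)) := by ring
            _ = 2 ^ (1/p) * M / δ := by rw [hδδ, one_mul]; ring
  -- nonnegativity of elements
  have hEnn : ∀ p : ℝ, 0 < p → ∀ v : BNSpace n F,
      0 ≤ δ ^ (-(1/p)) * (∫ t in (-δ)..δ, |(L (θ + t • v) - L θ) / δ| ^ p) ^ (1/p) :=
    fun p hp v => mul_nonneg (Real.rpow_nonneg hδ.le _) (Real.rpow_nonneg (hInn p hp v) _)
  have hSbdd : ∀ p : ℝ, 1 ≤ p → BddAbove ((fun v => δ ^ (-(1 / p)) *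
      (∫ t in (-δ)..δ, |(L (θ + t • v) - L θ) / δ| ^ p) ^ (1 / p)) '' phi θ) := by
    intro p hp
    refine ⟨2 ^ (1/p) * M / δ, ?_⟩
    rintro x ⟨v, hv, rfl⟩
    exact hEub p hp v hv
  have hSne : ∀ p : ℝ, ((fun v => δ ^ (-(1 / p)) *
      (∫ t in (-δ)..δ, |(L (θ + t • v) - L θ) / δ| ^ p) ^ (1 / p)) '' phi θ).Nonempty :=
    fun p => ⟨_, Set.mem_image_of_mem _ hw₀⟩
  -- upper bound for the sharpness
  have hub : ∀ p : ℝ, 1 ≤ p → δ * bnSharpness L p δ θ ≤ 2 ^ (1/p) * M := by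
    intro p hp
    have h1 : bnSharpness L p δ θ ≤ 2 ^ (1/p) * M / δ := by
      refine csSup_le (hSne p) ?_
      rintro x ⟨v, hv, rfl⟩
      exact hEub p hp v hv
    calc δ * bnSharpness L p δ θ ≤ δ * (2 ^ (1/p) * M / δ) :=
          mul_le_mul_of_nonneg_left h1 hδ.le
      _ = 2 ^ (1/p) * M := by field_simp
  -- nonnegativity of the sharpness
  have hnn : ∀ p : ℝ, 1 ≤ p → 0 ≤ δ * bnSharpness L p δ θ := by
    intro p hp
    refine mul_nonneg hδ.le ?_
    exact le_trans (hEnn p (by linarith) w₀) (le_csSup (hSbdd p hp) (Set.mem_image_of_mem _ hw₀))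
  -- lower bound via a chosen element
  have hlbv : ∀ p : ℝ, 1 ≤ p → ∀ v ∈ phi θ,
      δ * (δ ^ (-(1/p)) * (∫ t in (-δ)..δ, |(L (θ + t • v) - L θ) / δ| ^ p) ^ (1/p))
        ≤ δ * bnSharpness L p δ θ := by
    intro p hp v hv
    exact mul_le_mul_of_nonneg_left (le_csSup (hSbdd p hp) (Set.mem_image_of_mem _ hv)) hδ.le
  -- now prove the limit
  refine tendsto_order.2 ⟨fun a ha => ?_, fun b hb => ?_⟩
  · -- a < M : eventually a < δ * bnSharpness
    rcases lt_or_ge a 0 with ha0 | ha0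
    · filter_upwards [eventually_ge_atTop (1:ℝ)] with p hp
      exact lt_of_lt_of_le ha0 (hnn p hp)
    · -- 0 ≤ a < M
      set c : ℝ := (a + M) / 2 with hc
      have hac : a < c := by rw [hc]; linarith
      have hcM : c < M := by rw [hc]; linarith
      have hc0 : 0 < c := by rw [hc]; linarith
      -- find interval where g(·, q₀.2) > c
      have hcontg : ContinuousAt (fun t : ℝ => g (t, q₀.2)) q₀.1 :=
        (hgc.comp (continuous_id.prodMk continuous_const)).continuousAt
      have hev : ∀ᶠ t in nhds q₀.1, g (t, q₀.2) ∈ Set.Ioi c := by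
        refine hcontg (Ioi_mem_nhds ?_)
        show c < g (q₀.1, q₀.2)
        rw [show (q₀.1, q₀.2) = q₀ from rfl, hq₀]
        exact hcM
      obtain ⟨η, hη, hball⟩ := Metric.eventually_nhds_iff.mp hev
      obtain ⟨ht₀, hv₀⟩ := hq₀K
      rw [Set.mem_Icc] at ht₀
      set l : ℝ := max (-δ) (q₀.1 - η) with hl
      set u : ℝ := min δ (q₀.1 + η) with hu
      have hlu : l < u := by
        rw [hl, hu]
        simp only [lt_min_iff, max_lt_iff]
        refine ⟨⟨by linarith, by linarith [ht₀.1]⟩, ⟨by linarith [ht₀.2], by linarith⟩⟩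
      have hJsub : Set.Ioo l u ⊆ Set.Ioc (-δ) δ := fun t ht =>
        ⟨lt_of_le_of_lt (le_max_left _ _) ht.1, (lt_of_lt_of_le ht.2 (min_le_left _ _)).le⟩
      have hJg : ∀ t ∈ Set.Ioo l u, c ≤ g (t, q₀.2) := by
        intro t ht
        refine (hball ?_).le
        rw [Real.dist_eq, abs_lt]
        constructor
        · have := lt_of_le_of_lt (le_max_right (-δ) (q₀.1 - η)) ht.1; linarith
        · have := lt_of_lt_of_le ht.2 (min_le_right δ (q₀.1 + η)); linarith
      -- per-p lower bound: δ * bnSharpness ≥ ((u-l)/δ)^(1/p) * c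
      have hlow : ∀ p : ℝ, 1 ≤ p → ((u - l)/δ) ^ (1/p) * c ≤ δ * bnSharpness L p δ θ := by
        intro p hp
        have hp0 : (0:ℝ) < p := by linarith
        have h1p : (0:ℝ) ≤ 1/p := by positivity
        have hcδ : (0:ℝ) ≤ c / δ := by positivity
        have hI : (u - l) * (c/δ) ^ p
            ≤ ∫ t in (-δ)..δ, |(L (θ + t • q₀.2) - L θ) / δ| ^ p := by
          rw [intervalIntegral.integral_of_le (by linarith : -δ ≤ δ)]
          have hint : IntegrableOn (fun t : ℝ => |(L (θ + t • q₀.2) - L θ) / δ| ^ p)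
              (Set.Ioc (-δ) δ) volume := (hcont q₀.2 p hp0.le).integrableOn_Ioc
          have step1 : (∫ t in Set.Ioo l u, |(L (θ + t • q₀.2) - L θ) / δ| ^ p)
              ≤ ∫ t in Set.Ioc (-δ) δ, |(L (θ + t • q₀.2) - L θ) / δ| ^ p := by
            refine setIntegral_mono_set hint ?_ (HasSubset.Subset.eventuallyLE hJsub)
            exact Filter.Eventually.of_forall fun t => Real.rpow_nonneg (abs_nonneg _) _
          have step2 : (u - l) * (c/δ) ^ p
              ≤ ∫ t in Set.Ioo l u, |(L (θ + t • q₀.2) - L θ) / δ| ^ p := by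
            have hconst : (∫ _ in Set.Ioo l u, (c/δ) ^ p ∂volume) = (u - l) * (c/δ) ^ p := by
              rw [setIntegral_const, measureReal_def, Real.volume_Ioo, ENNReal.toReal_ofReal (by linarith),
                smul_eq_mul]
            rw [← hconst]
            refine setIntegral_mono_on (integrableOn_const ?_)
              (hint.mono_set hJsub) measurableSet_Ioo ?_
            · rw [Real.volume_Ioo]; exact ENNReal.ofReal_ne_top
            · intro t ht
              rw [hkey]
              refine Real.rpow_le_rpow hcδ ?_ hp0.le
              gcongr
              exact hJg t ht
          linarith
        have hIv := hInn p hp0 q₀.2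
        have h2 : ((u - l) * (c/δ) ^ p) ^ (1/p)
            ≤ (∫ t in (-δ)..δ, |(L (θ + t • q₀.2) - L θ) / δ| ^ p) ^ (1/p) :=
          Real.rpow_le_rpow (mul_nonneg (by linarith) (Real.rpow_nonneg hcδ _)) hI h1p
        rw [aux_rpow_mul_pow _ _ _ (by linarith) hcδ hp0.ne'] at h2
        have h3 : δ * (δ ^ (-(1/p)) * ((u - l) ^ (1/p) * (c/δ)))
            = ((u - l)/δ) ^ (1/p) * ((δ ^ (-(1/p)) * δ ^ (1/p)) * c) := by
          rw [Real.div_rpow (by linarith) hδ.le]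
          field_simp
        have hδδ : δ ^ (-(1/p)) * δ ^ (1/p) = 1 := by
          rw [← Real.rpow_add hδ]; norm_num
        calc ((u - l)/δ) ^ (1/p) * c
            = δ * (δ ^ (-(1/p)) * ((u - l) ^ (1/p) * (c/δ))) := by
              rw [h3, hδδ, one_mul]
          _ ≤ δ * (δ ^ (-(1/p)) *
              (∫ t in (-δ)..δ, |(L (θ + t • q₀.2) - L θ) / δ| ^ p) ^ (1/p)) :=
              mul_le_mul_of_nonneg_left
                (mul_le_mul_of_nonneg_left h2 (Real.rpow_nonneg hδ.le _)) hδ.le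
          _ ≤ δ * bnSharpness L p δ θ := hlbv p hp q₀.2 hv₀
      have hT : Tendsto (fun p : ℝ => ((u - l)/δ) ^ (1/p) * c) atTop (nhds c) := by
        have := (aux_tendsto_rpow_one_div ((u - l)/δ)
          (div_pos (by linarith) hδ)).mul_const c
        simpa using this
      filter_upwards [hT.eventually_const_lt hac, eventually_ge_atTop (1:ℝ)] with p h1 hp
      exact lt_of_lt_of_le h1 (hlow p hp)
  · -- M < b : eventually δ * bnSharpness < b
    have h2 : Tendsto (fun p : ℝ => (2:ℝ) ^ (1/p) * M) atTop (nhds M) := by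
      have := (aux_tendsto_rpow_one_div 2 (by norm_num)).mul_const M
      simpa using this
    filter_upwards [h2.eventually_lt_const hb, eventually_ge_atTop (1:ℝ)] with p h1 hp
    exact lt_of_le_of_lt (hub p hp) h1
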